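/- A strictly γ^{1/2}-convex function f : [0,∞) → [0,∞) has at most three fixed points. -/

import Mathlib

open Set

/-- If `a < b` are two fixed points in `[0,∞)` of a `C³` function, there is `c ∈ (a,b)`
where the derivative within `[0,∞)` equals `1`. -/
lemma aux_deriv_one (f : ℝ → ℝ) (hf : ContDiffOn ℝ 3 f (Ici 0))
    {a b : ℝ} (ha : 0 ≤ a) (hab : a < b) (hfa : f a = a) (hfb : f b = b) :
    ∃ c ∈ Ioo a b, derivWithin f (Ici 0) c = 1 := by
  have hsub : Icc a b ⊆ Ici (0:ℝ) := fun x hx => le_trans ha hx.1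
  have hcont : ContinuousOn f (Icc a b) := hf.continuousOn.mono hsub
  have hdiffIci : DifferentiableOn ℝ f (Ici 0) :=
    hf.differentiableOn (by norm_num)
  have hdiff : DifferentiableOn ℝ f (Ioo a b) := by
    intro x hx
    have hxpos : 0 < x := lt_of_le_of_lt ha hx.1
    have : DifferentiableAt ℝ f x :=
      (hdiffIci x (le_of_lt hxpos)).differentiableAt (Ici_mem_nhds hxpos)
    exact this.differentiableWithinAt
  obtain ⟨c, hc, hderiv⟩ := exists_deriv_eq_slope f hab hcont hdiff
  refine ⟨c, hc, ?_⟩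
  have hcpos : 0 < c := lt_of_le_of_lt ha hc.1
  rw [derivWithin_of_mem_nhds (Ici_mem_nhds hcpos), hderiv, hfa, hfb]
  exact div_self (by linarith)

/-- A strictly γ^{1/2}-convex function `f : [0,∞) → [0,∞)` (monotone, C³, `|f'| > 0`,
`1/√|f'|` strictly convex) has at most three fixed points. -/
theorem strictGammaHalfConvex_atMostThreeFixedPoints (f : ℝ → ℝ)
    (hf : ContDiffOn ℝ 3 f (Ici 0))
    (hfmap : ∀ x ∈ Ici (0:ℝ), f x ∈ Ici (0:ℝ))
    (hfmono : MonotoneOn f (Ici 0) ∨ AntitoneOn f (Ici 0))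
    (hf' : ∀ x ∈ Ici (0:ℝ), derivWithin f (Ici 0) x ≠ 0)
    (hfc : StrictConvexOn ℝ (Ici 0) (fun x => 1 / Real.sqrt |derivWithin f (Ici 0) x|)) :
    {x : ℝ | 0 ≤ x ∧ f x = x}.encard ≤ 3 := by
  by_contra h
  push_neg at h
  have h4 : (4 : ℕ∞) ≤ {x : ℝ | 0 ≤ x ∧ f x = x}.encard := Order.add_one_le_of_lt h
  obtain ⟨t, hts, ht4⟩ := Set.exists_subset_encard_eq h4
  have htfin : t.Finite := Set.finite_of_encard_eq_coe (k := 4) ht4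
  have hcard : htfin.toFinset.card = 4 := by
    have h' := htfin.encard_eq_coe_toFinset_card
    rw [ht4] at h'
    exact_mod_cast h'.symm
  set e := htfin.toFinset.orderEmbOfFin hcard with he
  have hmem : ∀ i : Fin 4, (e i) ∈ {x : ℝ | 0 ≤ x ∧ f x = x} := fun i =>
    hts (htfin.mem_toFinset.mp (htfin.toFinset.orderEmbOfFin_mem hcard i))
  have hsm : StrictMono e := e.strictMono
  set x0 := e 0; set x1 := e 1; set x2 := e 2; set x3 := e 3
  have h01 : x0 < x1 := hsm (by decide)
  have h12 : x1 < x2 := hsm (by decide)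
  have h23 : x2 < x3 := hsm (by decide)
  obtain ⟨hx0, hfx0⟩ := hmem 0
  obtain ⟨hx1, hfx1⟩ := hmem 1
  obtain ⟨hx2, hfx2⟩ := hmem 2
  obtain ⟨hx3, hfx3⟩ := hmem 3
  -- antitone case: impossible with two fixed points
  rcases hfmono with hmono | hanti
  swap
  · have := hanti hx0 hx1 (le_of_lt h01)
    rw [hfx0, hfx1] at this
    exact absurd this (not_le.mpr h01)
  -- monotone case: three points where derivative is 1
  obtain ⟨c1, hc1, hd1⟩ := aux_deriv_one f hf hx0 h01 hfx0 hfx1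
  obtain ⟨c2, hc2, hd2⟩ := aux_deriv_one f hf hx1 h12 hfx1 hfx2
  obtain ⟨c3, hc3, hd3⟩ := aux_deriv_one f hf hx2 h23 hfx2 hfx3
  have hc1pos : (0:ℝ) ≤ c1 := le_of_lt (lt_of_le_of_lt hx0 hc1.1)
  have hc3pos : (0:ℝ) ≤ c3 := le_of_lt (lt_of_le_of_lt hx2 hc3.1)
  have h13 : c1 < c3 := lt_trans (lt_trans hc1.2 h12) hc3.1
  have h1c2 : c1 < c2 := lt_trans hc1.2 hc2.1
  have hc23 : c2 < c3 := lt_trans hc2.2 hc3.1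
  set g := fun x => 1 / Real.sqrt |derivWithin f (Ici 0) x|
  have hg1 : g c1 = 1 := by simp [g, hd1]
  have hg2 : g c2 = 1 := by simp [g, hd2]
  have hg3 : g c3 = 1 := by simp [g, hd3]
  set p := (c3 - c2) / (c3 - c1)
  set q := (c2 - c1) / (c3 - c1)
  have hden : (0:ℝ) < c3 - c1 := by linarith
  have hp : 0 < p := div_pos (by linarith) hden
  have hq : 0 < q := div_pos (by linarith) hden
  have hpq : p + q = 1 := by
    simp only [p, q]
    rw [← add_div, div_eq_one_iff_eq hden.ne']
    ring
  have hcomb : p • c1 + q • c3 = c2 := by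
    simp only [smul_eq_mul, p, q]
    field_simp
    ring
  have := hfc.2 hc1pos hc3pos (ne_of_lt h13) hp hq hpq
  rw [hcomb] at this
  rw [hg1, hg2, hg3] at this
  simp only [smul_eq_mul, mul_one] at this
  linarith
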